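/- Let G be a triangle-free simple graph on n vertices and let c be an edge coloring of G such that the total color degree of G is strictly greater than 2mn. Then G contains a rainbow matching of size m+1 under c. -/

import Mathlib

variable {V : Type*} {α : Type*}

/-- `M` is a rainbow matching in `G` under the edge coloring `c`: its elements are
edges of `G`, pairwise vertex-disjoint, and receive pairwise distinct colors. -/
def IsRainbowMatching (G : SimpleGraph V) (c : Sym2 V → α) (M : Finset (Sym2 V)) : Prop :=
  ↑M ⊆ G.edgeSet ∧
  (∀ e ∈ M, ∀ f ∈ M, e ≠ f → ∀ v : V, v ∈ e → v ∉ f) ∧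
  ∀ e ∈ M, ∀ f ∈ M, c e = c f → e = f

/-- The color degree of `v`: the number of distinct colors appearing on edges incident to `v`. -/
noncomputable def colorDegree (G : SimpleGraph V) (c : Sym2 V → α) (v : V) : ℕ :=
  (c '' G.incidenceSet v).ncard

/-- The total color degree of `G`: the sum of color degrees over all vertices. -/
noncomputable def totalColorDegree [Fintype V] (G : SimpleGraph V) (c : Sym2 V → α) : ℕ :=
  ∑ v : V, colorDegree G c v

open Finset

private lemma sym2_mem_eq {x y : V} {e : Sym2 V} (hne : x ≠ y) (hx : x ∈ e) (hy : y ∈ e) :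
    e = s(x, y) := (Sym2.mem_and_mem_iff hne).mp ⟨hx, hy⟩

private lemma tri_free {G : SimpleGraph V} (hG : G.CliqueFree 3) {x a b : V}
    (h1 : G.Adj x a) (h2 : G.Adj x b) (h3 : G.Adj a b) : False := by
  classical
  exact hG {x, a, b} (SimpleGraph.is3Clique_triple_iff.mpr ⟨h1, h2, h3⟩)

private lemma sym2_repr (f : Sym2 V) : ∃ x y, f = s(x, y) :=
  Sym2.ind (fun x y => ⟨x, y, rfl⟩) f

private lemma main_count [Fintype V] (G : SimpleGraph V) (hG : G.CliqueFree 3)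
    (c : Sym2 V → α) (M : Finset (Sym2 V)) (hM : IsRainbowMatching G c M)
    (hmax : ∀ N, IsRainbowMatching G c N → N.card ≤ M.card) :
    totalColorDegree G c ≤ 2 * M.card * Fintype.card V := by
  classical
  obtain ⟨hsub, hdis, hinj⟩ := hM
  set k := M.card with hk
  set CM : Finset α := M.image c with hCMdef
  set VM : Finset V := Finset.univ.filter (fun v => ∃ e ∈ M, v ∈ e) with hVMdef
  set CA : V → Finset α := fun v => (G.neighborFinset v).image (fun w => c s(v, w)) with hCAdef
  set NO : V → Finset α := fun v =>
    ((G.neighborFinset v).filter (fun w => w ∉ VM ∧ c s(v, w) ∉ CM)).image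
      (fun w => c s(v, w)) with hNOdef
  -- basic membership facts
  have hmemVM : ∀ v : V, v ∈ VM ↔ ∃ e ∈ M, v ∈ e := by
    intro v; rw [hVMdef]; simp
  have hinVM : ∀ v (g : Sym2 V), g ∈ M → v ∈ g → v ∈ VM := by
    intro v g hg hvg; exact (hmemVM v).mpr ⟨g, hg, hvg⟩
  have hnotVM : ∀ v, v ∉ VM → ∀ g ∈ M, v ∉ g := by
    intro v hv g hg hvg; exact hv (hinVM v g hg hvg)
  have hCAmem : ∀ v γ, γ ∈ CA v ↔ ∃ w, G.Adj v w ∧ c s(v, w) = γ := by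
    intro v γ; rw [hCAdef]; simp [SimpleGraph.mem_neighborFinset]
  have hNOmem : ∀ v γ, γ ∈ NO v ↔
      ∃ w, (G.Adj v w ∧ w ∉ VM ∧ c s(v, w) ∉ CM) ∧ c s(v, w) = γ := by
    intro v γ; rw [hNOdef]; simp [SimpleGraph.mem_neighborFinset, and_assoc]
  have hCMmem : ∀ γ, γ ∈ CM ↔ ∃ g ∈ M, c g = γ := by
    intro γ; rw [hCMdef]; simp
  have hCMcard : CM.card ≤ k := by rw [hCMdef, hk]; exact card_image_le
  have hedge : ∀ g ∈ M, g ∈ G.edgeSet := fun g hg => hsub (mem_coe.mpr hg)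
  -- color degree is the card of CA
  have hdeg : ∀ v, colorDegree G c v = (CA v).card := by
    intro v
    have hset : c '' G.incidenceSet v = ↑(CA v) := by
      ext γ
      constructor
      · rintro ⟨e, he, rfl⟩
        have hv : v ∈ e := he.2
        have hee : e ∈ G.edgeSet := he.1
        obtain ⟨w, hw⟩ := Sym2.mem_iff_exists.mp hv
        subst hw
        exact mem_coe.mpr ((hCAmem v _).mpr ⟨w, G.mem_edgeSet.mp hee, rfl⟩)
      · intro hγ
        obtain ⟨w, hadj, rfl⟩ := (hCAmem v γ).mp (mem_coe.mp hγ)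
        exact ⟨s(v, w), ⟨G.mem_edgeSet.mpr hadj, Sym2.mem_mk_left v w⟩, rfl⟩
    rw [colorDegree, hset, Set.ncard_coe_finset]
  -- choice functions
  have hwit : ∀ v γ, γ ∈ CA v → ∃ w, G.Adj v w ∧ c s(v, w) = γ :=
    fun v γ h => (hCAmem v γ).mp h
  choose wit hwadj hwc using hwit
  have hmee : ∀ u, u ∈ VM → ∃ g, g ∈ M ∧ u ∈ g := by
    intro u hu; obtain ⟨g, hg, hug⟩ := (hmemVM u).mp hu; exact ⟨g, hg, hug⟩
  choose me hmeM hmeIn using hmee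
  have hmeU : ∀ u (hu : u ∈ VM) (g : Sym2 V), g ∈ M → u ∈ g → me u hu = g := by
    intro u hu g hg hug
    by_contra hne
    exact hdis _ (hmeM u hu) g hg hne u (hmeIn u hu) hug
  -- collision lemma: two neighbors of z in the same matching edge must coincide
  have hcol : ∀ (z w w' : V) (hw : w ∈ VM) (hw' : w' ∈ VM), G.Adj z w → G.Adj z w' →
      me w hw = me w' hw' → w = w' := by
    intro z w w' hw hw' ha ha' hmeq
    by_contra hne
    have h1 : w ∈ me w hw := hmeIn w hw
    have h2 : w' ∈ me w hw := by rw [hmeq]; exact hmeIn w' hw'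
    have hgeq : me w hw = s(w, w') := sym2_mem_eq hne h1 h2
    have hadjww' : G.Adj w w' := by
      have := hedge _ (hmeM w hw)
      rw [hgeq] at this
      exact G.mem_edgeSet.mp this
    exact tri_free hG ha ha' hadjww'
  set mE : V → Sym2 V := fun u => if hu : u ∈ VM then me u hu else s(u, u) with hmEdef
  have hmEM : ∀ u, u ∈ VM → mE u ∈ M := by
    intro u hu
    rw [hmEdef]; dsimp only; rw [dif_pos hu]; exact hmeM u hu
  have hcolE : ∀ z w w' : V, w ∈ VM → w' ∈ VM → G.Adj z w → G.Adj z w' →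
      mE w = mE w' → w = w' := by
    intro z w w' hw hw' ha ha' hmeq
    rw [hmEdef] at hmeq; dsimp only at hmeq; rw [dif_pos hw, dif_pos hw'] at hmeq
    exact hcol z w w' hw hw' ha ha' hmeq
  -- swap lemma 1: no edge with a new color disjoint from M
  have noswap1 : ∀ a b, G.Adj a b → (∀ g ∈ M, a ∉ g ∧ b ∉ g) → c s(a, b) ∉ CM → False := by
    intro a b hab hdj hc
    have hnm : s(a, b) ∉ M := fun hmem => (hdj _ hmem).1 (Sym2.mem_mk_left a b)
    have hN : IsRainbowMatching G c (insert s(a, b) M) := by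
      refine ⟨?_, ?_, ?_⟩
      · intro e he
        rw [coe_insert] at he
        rcases he with rfl | he
        · exact G.mem_edgeSet.mpr hab
        · exact hsub he
      · intro e he f hf hef v hv
        rcases mem_insert.mp he with he1 | he2 <;> rcases mem_insert.mp hf with hf1 | hf2
        · exact absurd (he1.trans hf1.symm) hef
        · subst he1
          intro hvf
          rcases Sym2.mem_iff.mp hv with rfl | rfl
          · exact (hdj f hf2).1 hvf
          · exact (hdj f hf2).2 hvf
        · subst hf1
          intro hvf
          rcases Sym2.mem_iff.mp hvf with rfl | rfl
          · exact (hdj e he2).1 hv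
          · exact (hdj e he2).2 hv
        · exact hdis e he2 f hf2 hef v hv
      · intro e he f hf hcc
        rcases mem_insert.mp he with he1 | he2 <;> rcases mem_insert.mp hf with hf1 | hf2
        · exact he1.trans hf1.symm
        · subst he1; exact absurd ((hCMmem _).mpr ⟨f, hf2, hcc.symm⟩) hc
        · subst hf1; exact absurd ((hCMmem _).mpr ⟨e, he2, hcc⟩) hc
        · exact hinj e he2 f hf2 hcc
    have := hmax _ hN
    rw [card_insert_of_notMem hnm] at this
    omega
  -- swap lemma 2: exchange an edge of M for two new disjoint edges
  have noswap2 : ∀ f ∈ M, ∀ a b a' b' : V, G.Adj a b → G.Adj a' b' →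
      (∀ g ∈ M, g ≠ f → a ∉ g ∧ b ∉ g ∧ a' ∉ g ∧ b' ∉ g) →
      (a ≠ a' ∧ a ≠ b' ∧ b ≠ a' ∧ b ≠ b') →
      c s(a, b) ≠ c s(a', b') →
      (∀ g ∈ M, g ≠ f → c s(a, b) ≠ c g) →
      (∀ g ∈ M, g ≠ f → c s(a', b') ≠ c g) → False := by
    intro f hf a b a' b' hab hab' hdj hsep hc12 hcM1 hcM2
    have hne12 : s(a, b) ≠ s(a', b') := fun h => hc12 (by rw [h])
    have h2nm : s(a', b') ∉ M.erase f := by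
      intro hmem
      obtain ⟨hne, hmem'⟩ := mem_erase.mp hmem
      exact (hdj _ hmem' hne).2.2.1 (Sym2.mem_mk_left a' b')
    have h1nm : s(a, b) ∉ insert s(a', b') (M.erase f) := by
      intro hmem
      rcases mem_insert.mp hmem with h | hmem'
      · exact hne12 h
      · obtain ⟨hne, hmem''⟩ := mem_erase.mp hmem'
        exact (hdj _ hmem'' hne).1 (Sym2.mem_mk_left a b)
    set N := insert s(a, b) (insert s(a', b') (M.erase f)) with hNdef
    have hmemN : ∀ e, e ∈ N ↔ e = s(a, b) ∨ e = s(a', b') ∨ (e ∈ M ∧ e ≠ f) := by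
      intro e
      rw [hNdef]
      simp only [mem_insert, mem_erase]
      tauto
    have hN : IsRainbowMatching G c N := by
      refine ⟨?_, ?_, ?_⟩
      · intro e he
        rcases (hmemN e).mp (mem_coe.mp he) with rfl | rfl | ⟨he', _⟩
        · exact G.mem_edgeSet.mpr hab
        · exact G.mem_edgeSet.mpr hab'
        · exact hedge _ he'
      · intro e he g hg heg v hv
        rcases (hmemN e).mp he with rfl | rfl | ⟨he', hef⟩ <;>
          rcases (hmemN g).mp hg with rfl | rfl | ⟨hg', hgf⟩
        · exact absurd rfl heg
        · intro hvg
          rcases Sym2.mem_iff.mp hv with rfl | rfl <;>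
            rcases Sym2.mem_iff.mp hvg with rfl | rfl
          · exact hsep.1 rfl
          · exact hsep.2.1 rfl
          · exact hsep.2.2.1 rfl
          · exact hsep.2.2.2 rfl
        · intro hvg
          rcases Sym2.mem_iff.mp hv with rfl | rfl
          · exact (hdj g hg' hgf).1 hvg
          · exact (hdj g hg' hgf).2.1 hvg
        · intro hvg
          rcases Sym2.mem_iff.mp hv with rfl | rfl <;>
            rcases Sym2.mem_iff.mp hvg with rfl | rfl
          · exact hsep.1 rfl
          · exact hsep.2.2.1 rfl
          · exact hsep.2.1 rfl
          · exact hsep.2.2.2 rfl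
        · exact absurd rfl heg
        · intro hvg
          rcases Sym2.mem_iff.mp hv with rfl | rfl
          · exact (hdj g hg' hgf).2.2.1 hvg
          · exact (hdj g hg' hgf).2.2.2 hvg
        · intro hvg
          rcases Sym2.mem_iff.mp hvg with rfl | rfl
          · exact (hdj e he' hef).1 hv
          · exact (hdj e he' hef).2.1 hv
        · intro hvg
          rcases Sym2.mem_iff.mp hvg with rfl | rfl
          · exact (hdj e he' hef).2.2.1 hv
          · exact (hdj e he' hef).2.2.2 hv
        · exact hdis e he' g hg' heg v hv
      · intro e he g hg hcc
        rcases (hmemN e).mp he with rfl | rfl | ⟨he', hef⟩ <;>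
          rcases (hmemN g).mp hg with rfl | rfl | ⟨hg', hgf⟩
        · rfl
        · exact absurd hcc hc12
        · exact absurd hcc (hcM1 g hg' hgf)
        · exact absurd hcc.symm hc12
        · rfl
        · exact absurd hcc (hcM2 g hg' hgf)
        · exact absurd hcc.symm (hcM1 e he' hef)
        · exact absurd hcc.symm (hcM2 e he' hef)
        · exact hinj e he' g hg' hcc
    have hcard : N.card = k + 1 := by
      rw [hNdef, card_insert_of_notMem h1nm, card_insert_of_notMem h2nm,
        card_erase_of_mem hf]
      have hk1 : 1 ≤ k := by
        rw [hk]; exact card_pos.mpr ⟨f, hf⟩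
      omega
    have := hmax _ hN
    rw [hcard] at this
    omega
  -- FACT 1 : new-colored edges from outside vertices go into VM
  have hout1 : ∀ z, z ∉ VM → ∀ w, G.Adj z w → c s(z, w) ∉ CM → w ∈ VM := by
    intro z hz w hadj hc
    by_contra hw
    refine noswap1 z w hadj (fun g hg => ⟨hnotVM z hz g hg, hnotVM w hw g hg⟩) hc
  -- FACT 3 : both ends of a matching edge cannot have distinct outside new colors
  have hF3 : ∀ x y : V, s(x, y) ∈ M → ∀ γ ∈ NO x, ∀ δ ∈ NO y, γ = δ := by
    intro x y hfM γ hγ δ hδ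
    obtain ⟨wx, ⟨hadjx, hwxVM, hwxnew⟩, hcx⟩ := (hNOmem x γ).mp hγ
    obtain ⟨wy, ⟨hadjy, hwyVM, hwynew⟩, hcy⟩ := (hNOmem y δ).mp hδ
    by_contra hne
    have hxy : G.Adj x y := G.mem_edgeSet.mp (hedge _ hfM)
    have hxVM : x ∈ VM := hinVM x _ hfM (Sym2.mem_mk_left x y)
    have hyVM : y ∈ VM := hinVM y _ hfM (Sym2.mem_mk_right x y)
    have hwxy : wx ≠ wy := by
      rintro rfl
      exact tri_free hG hadjx.symm hadjy.symm hxy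
    refine noswap2 s(x, y) hfM x wx y wy hadjx hadjy ?_ ?_ ?_ ?_ ?_
    · intro g hg hgf
      refine ⟨hdis _ hfM g hg (fun h => hgf h.symm) x (Sym2.mem_mk_left x y),
        hnotVM wx hwxVM g hg,
        hdis _ hfM g hg (fun h => hgf h.symm) y (Sym2.mem_mk_right x y),
        hnotVM wy hwyVM g hg⟩
    · exact ⟨hxy.ne, fun h => hwyVM (h ▸ hxVM), fun h => hwxVM (h.symm ▸ hyVM), hwxy⟩
    · rw [hcx, hcy]; exact hne
    · intro g hg hgf hcg
      exact hwxnew ((hCMmem _).mpr ⟨g, hg, hcg.symm⟩)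
    · intro g hg hgf hcg
      exact hwynew ((hCMmem _).mpr ⟨g, hg, hcg.symm⟩)
  -- dichotomy for bad edges
  have hF3or : ∀ x y : V, s(x, y) ∈ M → 3 ≤ (NO x).card + (NO y).card →
      NO x = ∅ ∨ NO y = ∅ := by
    intro x y hf h3
    by_contra hcon
    push_neg at hcon
    obtain ⟨hx, hy⟩ := hcon
    obtain ⟨γ0, hγ0⟩ := hx
    obtain ⟨δ0, hδ0⟩ := hy
    have h1 : NO x ⊆ {δ0} := by
      intro γ hγ; rw [mem_singleton]; exact hF3 x y hf γ hγ δ0 hδ0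
    have h2 : NO y ⊆ {γ0} := by
      intro δ hδ; rw [mem_singleton]; exact (hF3 x y hf γ0 hγ0 δ hδ).symm
    have := card_le_card h1
    have := card_le_card h2
    simp only [card_singleton] at *
    omega
  -- FACT 4 : for a bad edge f with hub v, outside vertices see c f only via VM
  have hF4 : ∀ f ∈ M, ∀ v, v ∈ f → 3 ≤ (NO v).card → ∀ z t : V, z ∉ VM → t ∉ VM →
      G.Adj z t → c s(z, t) = c f → False := by
    intro f hf v hvf h3 z t hz ht hadj hc
    have hWcard : 3 ≤ ((G.neighborFinset v).filter
        (fun w => w ∉ VM ∧ c s(v, w) ∉ CM)).card := by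
      refine le_trans h3 ?_
      simp only [hNOdef]
      exact card_image_le
    have hne : (((G.neighborFinset v).filter (fun w => w ∉ VM ∧ c s(v, w) ∉ CM)) \
        {z, t}).Nonempty := by
      set W := (G.neighborFinset v).filter (fun w => w ∉ VM ∧ c s(v, w) ∉ CM) with hWdef
      rw [← card_pos]
      have h2 : (W ∩ {z, t}).card ≤ 2 := by
        refine le_trans (card_le_card inter_subset_right) ?_
        refine le_trans (card_insert_le _ _) ?_
        simp
      have hsd := card_sdiff_add_card_inter W ({z, t} : Finset V)
      omega
    obtain ⟨zl, hzl⟩ := hne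
    rw [mem_sdiff, mem_filter, SimpleGraph.mem_neighborFinset] at hzl
    obtain ⟨⟨hadjvzl, hzlVM, hzlnew⟩, hzlnotzt⟩ := hzl
    rw [mem_insert, mem_singleton] at hzlnotzt
    push_neg at hzlnotzt
    have hvVM : v ∈ VM := hinVM v f hf hvf
    have hcfCM : c f ∈ CM := (hCMmem _).mpr ⟨f, hf, rfl⟩
    refine noswap2 f hf z t v zl hadj hadjvzl ?_ ?_ ?_ ?_ ?_
    · intro g hg hgf
      exact ⟨hnotVM z hz g hg, hnotVM t ht g hg,
        hdis f hf g hg (fun h => hgf h.symm) v hvf, hnotVM zl hzlVM g hg⟩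
    · exact ⟨fun h => hz (by rw [h]; exact hvVM), fun h => hzlnotzt.1 h.symm,
        fun h => ht (by rw [h]; exact hvVM), fun h => hzlnotzt.2 h.symm⟩
    · rw [hc]; intro h; exact hzlnew (h ▸ hcfCM)
    · intro g hg hgf
      rw [hc]; intro h
      exact hgf (hinj f hf g hg h).symm
    · intro g hg hgf h
      exact hzlnew ((hCMmem _).mpr ⟨g, hg, h.symm⟩)
  -- the vertex set of an edge of M as a Finset
  have hvset : ∀ x y : V, s(x, y) ∈ M →
      (Finset.univ.filter (fun v => v ∈ s(x, y))) = {x, y} := by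
    intro x y _
    ext u
    simp [Sym2.mem_iff]
  have hndiag : ∀ x y : V, s(x, y) ∈ M → x ≠ y := by
    intro x y hf
    have := G.not_isDiag_of_mem_edgeSet (hedge _ hf)
    rw [Sym2.mk_isDiag_iff] at this
    exact this
  -- nsum
  set nsum : Sym2 V → ℕ := fun f => ∑ v ∈ Finset.univ.filter (fun v => v ∈ f), (NO v).card
    with hnsumdef
  have hnsum_pair : ∀ x y : V, s(x, y) ∈ M →
      nsum s(x, y) = (NO x).card + (NO y).card := by
    intro x y hf
    rw [hnsumdef]
    simp only
    rw [hvset x y hf, sum_pair (hndiag x y hf)]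
  -- Hub lemma
  have hHub : ∀ f ∈ M, 3 ≤ nsum f → ∀ v, v ∈ f → (NO v).Nonempty → 3 ≤ (NO v).card := by
    intro f hf h3 v hvf hne
    obtain ⟨y, hy⟩ := Sym2.mem_iff_exists.mp hvf
    subst hy
    rw [hnsum_pair v y hf] at h3
    rcases hF3or v y hf h3 with h | h
    · rw [h] at hne; exact absurd rfl (nonempty_iff_ne_empty.mp hne)
    · rw [h] at h3; simpa using h3
  -- Per-vertex bound for matched vertices
  have hVMbound : ∀ f ∈ M, ∀ v, v ∈ f →
      (CA v).card ≤ CM.card + ((M.erase f).card + (NO v).card) := by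
    intro f hf v hvf
    have hvVM : v ∈ VM := hinVM v f hf hvf
    classical
    have hcard := card_le_card_of_injOn
      (f := fun γ : α =>
        if hCMγ : γ ∈ CM then (Sum.inl γ : α ⊕ (Sym2 V ⊕ α))
        else if hNOγ : γ ∈ NO v then Sum.inr (Sum.inr γ)
        else if hγ : γ ∈ CA v then
          (if hwVM : wit v γ hγ ∈ VM then Sum.inr (Sum.inl (me _ hwVM)) else Sum.inl γ)
        else Sum.inl γ)
      (s := CA v) (t := CM.disjSum ((M.erase f).disjSum (NO v)))
      ?_ ?_
    · rw [card_disjSum, card_disjSum] at hcard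
      exact hcard
    · -- maps to
      intro γ hγ
      replace hγ : γ ∈ CA v := mem_coe.mp hγ
      dsimp only
      by_cases hCMγ : γ ∈ CM
      · rw [dif_pos hCMγ]; exact inl_mem_disjSum.mpr hCMγ
      by_cases hNOγ : γ ∈ NO v
      · rw [dif_neg hCMγ, dif_pos hNOγ]
        exact inr_mem_disjSum.mpr (inr_mem_disjSum.mpr hNOγ)
      have hwVM : wit v γ hγ ∈ VM := by
        by_contra hw
        exact hNOγ ((hNOmem v γ).mpr ⟨wit v γ hγ,
          ⟨hwadj v γ hγ, hw, fun h => hCMγ ((hwc v γ hγ) ▸ h)⟩, hwc v γ hγ⟩)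
      rw [dif_neg hCMγ, dif_neg hNOγ, dif_pos hγ, dif_pos hwVM]
      refine inr_mem_disjSum.mpr (inl_mem_disjSum.mpr (mem_erase.mpr
        ⟨?_, hmeM _ hwVM⟩))
      intro hmef
      have hwinf : wit v γ hγ ∈ f := by rw [← hmef]; exact hmeIn _ hwVM
      have hwne : v ≠ wit v γ hγ := (hwadj v γ hγ).ne
      have hfeq : f = s(v, wit v γ hγ) := sym2_mem_eq hwne.symm hwinf hvf |>.trans Sym2.eq_swap
      apply hCMγ
      rw [← hwc v γ hγ, ← hfeq]
      exact (hCMmem _).mpr ⟨f, hf, rfl⟩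
    · -- injective
      intro γ hγ' γ' hγ'' heq
      have hγ : γ ∈ CA v := mem_coe.mp hγ'
      have hγ2 : γ' ∈ CA v := mem_coe.mp hγ''
      dsimp only at heq
      by_cases h1 : γ ∈ CM <;> by_cases h2 : γ' ∈ CM
      · rw [dif_pos h1, dif_pos h2] at heq; exact Sum.inl.inj heq
      case neg =>
        rw [dif_pos h1] at heq
        by_cases h2' : γ' ∈ NO v
        · rw [dif_neg h2, dif_pos h2'] at heq; exact absurd heq (by simp)
        · have hwVM2 : wit v γ' hγ2 ∈ VM := by
            by_contra hw
            exact h2' ((hNOmem v γ').mpr ⟨wit v γ' hγ2,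
              ⟨hwadj v γ' hγ2, hw, fun h => h2 ((hwc v γ' hγ2) ▸ h)⟩, hwc v γ' hγ2⟩)
          rw [dif_neg h2, dif_neg h2', dif_pos hγ2, dif_pos hwVM2] at heq
          exact absurd heq (by simp)
      case pos =>
        rw [dif_pos h2] at heq
        by_cases h1' : γ ∈ NO v
        · rw [dif_neg h1, dif_pos h1'] at heq; exact absurd heq (by simp)
        · have hwVM1 : wit v γ hγ ∈ VM := by
            by_contra hw
            exact h1' ((hNOmem v γ).mpr ⟨wit v γ hγ,
              ⟨hwadj v γ hγ, hw, fun h => h1 ((hwc v γ hγ) ▸ h)⟩, hwc v γ hγ⟩)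
          rw [dif_neg h1, dif_neg h1', dif_pos hγ, dif_pos hwVM1] at heq
          exact absurd heq (by simp)
      · -- both not in CM
        by_cases h1' : γ ∈ NO v <;> by_cases h2' : γ' ∈ NO v
        · rw [dif_neg h1, dif_pos h1', dif_neg h2, dif_pos h2'] at heq
          exact Sum.inr.inj (Sum.inr.inj heq)
        · have hwVM2 : wit v γ' hγ2 ∈ VM := by
            by_contra hw
            exact h2' ((hNOmem v γ').mpr ⟨wit v γ' hγ2,
              ⟨hwadj v γ' hγ2, hw, fun h => h2 ((hwc v γ' hγ2) ▸ h)⟩, hwc v γ' hγ2⟩)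
          rw [dif_neg h1, dif_pos h1', dif_neg h2, dif_neg h2', dif_pos hγ2,
            dif_pos hwVM2] at heq
          exact absurd (Sum.inr.inj heq) (by simp)
        · have hwVM1 : wit v γ hγ ∈ VM := by
            by_contra hw
            exact h1' ((hNOmem v γ).mpr ⟨wit v γ hγ,
              ⟨hwadj v γ hγ, hw, fun h => h1 ((hwc v γ hγ) ▸ h)⟩, hwc v γ hγ⟩)
          rw [dif_neg h1, dif_neg h1', dif_pos hγ, dif_pos hwVM1, dif_neg h2,
            dif_pos h2'] at heq
          exact absurd (Sum.inr.inj heq) (by simp)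
        · have hwVM1 : wit v γ hγ ∈ VM := by
            by_contra hw
            exact h1' ((hNOmem v γ).mpr ⟨wit v γ hγ,
              ⟨hwadj v γ hγ, hw, fun h => h1 ((hwc v γ hγ) ▸ h)⟩, hwc v γ hγ⟩)
          have hwVM2 : wit v γ' hγ2 ∈ VM := by
            by_contra hw
            exact h2' ((hNOmem v γ').mpr ⟨wit v γ' hγ2,
              ⟨hwadj v γ' hγ2, hw, fun h => h2 ((hwc v γ' hγ2) ▸ h)⟩, hwc v γ' hγ2⟩)
          rw [dif_neg h1, dif_neg h1', dif_pos hγ, dif_pos hwVM1, dif_neg h2,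
            dif_neg h2', dif_pos hγ2, dif_pos hwVM2] at heq
          have hmeq := Sum.inl.inj (Sum.inr.inj heq)
          have hww := hcol v _ _ hwVM1 hwVM2 (hwadj v γ hγ) (hwadj v γ' hγ2) hmeq
          rw [← hwc v γ hγ, ← hwc v γ' hγ2, hww]
  -- badness and witnesses
  set Bad : Sym2 V → Prop := fun f => 3 ≤ nsum f with hBaddef
  set Wit : V → Sym2 V → Prop :=
    fun z f => ∃ v, v ∈ f ∧ G.Adj z v ∧ c s(z, v) ∉ CM with hWitdef
  -- Per-outside-vertex bound
  have hOUT : ∀ z, z ∉ VM →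
      (CA z).card + (M.filter (fun f => Bad f ∧ Wit z f)).card ≤ CM.card + M.card := by
    intro z hz
    have hseenVM : ∀ f ∈ M.filter (fun f => Bad f ∧ Wit z f), ∀ hsee : c f ∈ CA z,
        wit z (c f) hsee ∈ VM := by
      intro f hf hsee
      obtain ⟨hfM, hBadf, hWitf⟩ := mem_filter.mp hf
      simp only [hBaddef] at hBadf
      simp only [hWitdef] at hWitf
      by_contra ht
      obtain ⟨v, hvf, hadjzv, hnew⟩ := hWitf
      have hNOne : (NO v).Nonempty := ⟨c s(v, z), (hNOmem v _).mpr
        ⟨z, ⟨hadjzv.symm, hz, by rw [Sym2.eq_swap]; exact hnew⟩, rfl⟩⟩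
      have h3 : 3 ≤ (NO v).card := hHub f hfM hBadf v hvf hNOne
      exact hF4 f hfM v hvf h3 z _ hz ht (hwadj z (c f) hsee) (hwc z (c f) hsee)
    have hcard := card_le_card_of_injOn
      (f := Sum.elim
        (fun γ : α => if hγ : γ ∈ CA z then
            (if γ ∈ CM then (Sum.inl γ : α ⊕ Sym2 V)
             else Sum.inr (mE (wit z γ hγ)))
          else Sum.inl γ)
        (fun f : Sym2 V => if hsee : c f ∈ CA z then
            (Sum.inr (mE (wit z (c f) hsee)) : α ⊕ Sym2 V)
          else Sum.inl (c f)))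
      (s := (CA z).disjSum (M.filter (fun f => Bad f ∧ Wit z f)))
      (t := CM.disjSum M) ?_ ?_
    · rw [card_disjSum, card_disjSum] at hcard
      exact hcard
    · -- maps into the target
      intro x hx
      rcases mem_disjSum.mp hx with ⟨γ, hγ, rfl⟩ | ⟨f, hf, rfl⟩
      · dsimp only [Sum.elim_inl]
        rw [dif_pos hγ]
        by_cases hcm : γ ∈ CM
        · rw [if_pos hcm]; exact inl_mem_disjSum.mpr hcm
        · rw [if_neg hcm]
          have hwVM : wit z γ hγ ∈ VM :=
            hout1 z hz _ (hwadj z γ hγ) (fun hmem => hcm ((hwc z γ hγ) ▸ hmem))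
          exact inr_mem_disjSum.mpr (hmEM _ hwVM)
      · dsimp only [Sum.elim_inr]
        by_cases hsee : c f ∈ CA z
        · rw [dif_pos hsee]
          exact inr_mem_disjSum.mpr (hmEM _ (hseenVM f hf hsee))
        · rw [dif_neg hsee]
          exact inl_mem_disjSum.mpr ((hCMmem _).mpr ⟨f, (mem_filter.mp hf).1, rfl⟩)
    · -- injectivity
      intro x hx y hy heq
      rcases mem_disjSum.mp (mem_coe.mp hx) with ⟨γ, hγ, rfl⟩ | ⟨f, hf, rfl⟩ <;>
        rcases mem_disjSum.mp (mem_coe.mp hy) with ⟨γ', hγ2, rfl⟩ | ⟨f', hf2, rfl⟩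
      · -- inl / inl
        dsimp only [Sum.elim_inl] at heq
        rw [dif_pos hγ, dif_pos hγ2] at heq
        by_cases hcm : γ ∈ CM <;> by_cases hcm2 : γ' ∈ CM
        · rw [if_pos hcm, if_pos hcm2] at heq
          exact congrArg Sum.inl (Sum.inl.inj heq)
        · rw [if_pos hcm, if_neg hcm2] at heq; exact absurd heq (by simp)
        · rw [if_neg hcm, if_pos hcm2] at heq; exact absurd heq (by simp)
        · rw [if_neg hcm, if_neg hcm2] at heq
          have hw1 : wit z γ hγ ∈ VM :=
            hout1 z hz _ (hwadj z γ hγ) (fun hmem => hcm ((hwc z γ hγ) ▸ hmem))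
          have hw2 : wit z γ' hγ2 ∈ VM :=
            hout1 z hz _ (hwadj z γ' hγ2) (fun hmem => hcm2 ((hwc z γ' hγ2) ▸ hmem))
          have hww := hcolE z _ _ hw1 hw2 (hwadj z γ hγ) (hwadj z γ' hγ2)
            (Sum.inr.inj heq)
          have : γ = γ' := by rw [← hwc z γ hγ, ← hwc z γ' hγ2, hww]
          exact congrArg Sum.inl this
      · -- inl / inr
        dsimp only [Sum.elim_inl, Sum.elim_inr] at heq
        rw [dif_pos hγ] at heq
        by_cases hcm : γ ∈ CM <;> by_cases hsee : c f' ∈ CA z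
        · rw [if_pos hcm, dif_pos hsee] at heq; exact absurd heq (by simp)
        · rw [if_pos hcm, dif_neg hsee] at heq
          exact absurd ((Sum.inl.inj heq) ▸ hγ) hsee
        · rw [if_neg hcm, dif_pos hsee] at heq
          have hw1 : wit z γ hγ ∈ VM :=
            hout1 z hz _ (hwadj z γ hγ) (fun hmem => hcm ((hwc z γ hγ) ▸ hmem))
          have hw2 : wit z (c f') hsee ∈ VM := hseenVM f' hf2 hsee
          have hww := hcolE z _ _ hw1 hw2 (hwadj z γ hγ) (hwadj z (c f') hsee)
            (Sum.inr.inj heq)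
          have hγcf : γ = c f' := by rw [← hwc z γ hγ, ← hwc z (c f') hsee, hww]
          have : c f' ∈ CM := (hCMmem _).mpr ⟨f', (mem_filter.mp hf2).1, rfl⟩
          exact absurd (hγcf ▸ this) hcm
        · rw [if_neg hcm, dif_neg hsee] at heq; exact absurd heq (by simp)
      · -- inr / inl
        dsimp only [Sum.elim_inl, Sum.elim_inr] at heq
        rw [dif_pos hγ2] at heq
        by_cases hcm : γ' ∈ CM <;> by_cases hsee : c f ∈ CA z
        · rw [if_pos hcm, dif_pos hsee] at heq; exact absurd heq (by simp)
        · rw [if_pos hcm, dif_neg hsee] at heq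
          exact absurd ((Sum.inl.inj heq).symm ▸ hγ2) hsee
        · rw [if_neg hcm, dif_pos hsee] at heq
          have hw1 : wit z γ' hγ2 ∈ VM :=
            hout1 z hz _ (hwadj z γ' hγ2) (fun hmem => hcm ((hwc z γ' hγ2) ▸ hmem))
          have hw2 : wit z (c f) hsee ∈ VM := hseenVM f hf hsee
          have hww := hcolE z _ _ hw2 hw1 (hwadj z (c f) hsee) (hwadj z γ' hγ2)
            (Sum.inr.inj heq)
          have hγcf : γ' = c f := by rw [← hwc z γ' hγ2, ← hwc z (c f) hsee, hww]
          have : c f ∈ CM := (hCMmem _).mpr ⟨f, (mem_filter.mp hf).1, rfl⟩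
          exact absurd (hγcf ▸ this) hcm
        · rw [if_neg hcm, dif_neg hsee] at heq; exact absurd heq (by simp)
      · -- inr / inr
        dsimp only [Sum.elim_inr] at heq
        by_cases hsee : c f ∈ CA z <;> by_cases hsee2 : c f' ∈ CA z
        · rw [dif_pos hsee, dif_pos hsee2] at heq
          have hw1 : wit z (c f) hsee ∈ VM := hseenVM f hf hsee
          have hw2 : wit z (c f') hsee2 ∈ VM := hseenVM f' hf2 hsee2
          have hww := hcolE z _ _ hw1 hw2 (hwadj z (c f) hsee) (hwadj z (c f') hsee2)
            (Sum.inr.inj heq)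
          have hcc : c f = c f' := by
            rw [← hwc z (c f) hsee, ← hwc z (c f') hsee2, hww]
          exact congrArg Sum.inr (hinj f (mem_filter.mp hf).1 f' (mem_filter.mp hf2).1 hcc)
        · rw [dif_pos hsee, dif_neg hsee2] at heq; exact absurd heq (by simp)
        · rw [dif_neg hsee, dif_pos hsee2] at heq; exact absurd heq (by simp)
        · rw [dif_neg hsee, dif_neg hsee2] at heq
          exact congrArg Sum.inr
            (hinj f (mem_filter.mp hf).1 f' (mem_filter.mp hf2).1 (Sum.inl.inj heq))
  -- witness count for bad edges (ordered version)
  have hWitsAux : ∀ x y : V, s(x, y) ∈ M →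
      (NO x).card ≤ (VMᶜ.filter (fun z => Wit z s(x, y))).card := by
    intro x y hf
    have hex : ∀ γ ∈ NO x, ∃ w, (G.Adj x w ∧ w ∉ VM ∧ c s(x, w) ∉ CM) ∧ c s(x, w) = γ :=
      fun γ hγ => (hNOmem x γ).mp hγ
    choose nw hnw using hex
    refine card_le_card_of_injOn
      (f := fun γ => if hγ : γ ∈ NO x then nw γ hγ else x) ?_ ?_
    · intro γ hγ
      replace hγ : γ ∈ NO x := mem_coe.mp hγ
      dsimp only
      rw [dif_pos hγ]
      refine mem_filter.mpr ⟨mem_compl.mpr (hnw γ hγ).1.2.1, ?_⟩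
      simp only [hWitdef]
      exact ⟨x, Sym2.mem_mk_left x y, (hnw γ hγ).1.1.symm,
        by rw [Sym2.eq_swap]; exact (hnw γ hγ).1.2.2⟩
    · intro γ h1 γ' h2 heq
      have hγ := mem_coe.mp h1
      have hγ2 := mem_coe.mp h2
      dsimp only at heq
      rw [dif_pos hγ, dif_pos hγ2] at heq
      rw [← (hnw γ hγ).2, ← (hnw γ' hγ2).2, heq]
  have hWitsBad : ∀ f ∈ M, 3 ≤ nsum f →
      nsum f ≤ (VMᶜ.filter (fun z => Wit z f)).card := by
    intro f hf h3
    obtain ⟨x, y, rfl⟩ := sym2_repr f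
    rw [hnsum_pair x y hf] at h3 ⊢
    rcases hF3or x y hf h3 with hx | hy
    · have hf' : s(y, x) ∈ M := by rw [Sym2.eq_swap]; exact hf
      have haux := hWitsAux y x hf'
      have hswap : s(y, x) = s(x, y) := Sym2.eq_swap
      rw [hswap] at haux
      rw [hx]
      simpa using haux
    · have haux := hWitsAux x y hf
      rw [hy]
      simpa using haux
  -- cardinality facts for VM
  have hVMbi : VM = M.biUnion (fun f => Finset.univ.filter (fun v => v ∈ f)) := by
    ext v
    rw [hmemVM]
    simp
  have hvcard2 : ∀ f ∈ M, (Finset.univ.filter (fun v => v ∈ f)).card = 2 := by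
    intro f hf
    obtain ⟨x, y, rfl⟩ := sym2_repr f
    rw [hvset x y hf]
    exact card_pair (hndiag x y hf)
  have hdisjf : ∀ f ∈ M, ∀ g ∈ M, f ≠ g →
      Disjoint (Finset.univ.filter (fun v => v ∈ f)) (Finset.univ.filter (fun v => v ∈ g)) := by
    intro f hf g hg hne
    rw [Finset.disjoint_left]
    intro v hv hv'
    rw [mem_filter] at hv hv'
    exact hdis f hf g hg hne v hv.2 hv'.2
  have hpd : (M : Set (Sym2 V)).PairwiseDisjoint
      (fun f => Finset.univ.filter (fun v => v ∈ f)) := by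
    intro f hf g hg hne
    exact hdisjf f (mem_coe.mp hf) g (mem_coe.mp hg) hne
  have hVMcard : VM.card = 2 * k := by
    rw [hVMbi, card_biUnion hdisjf, Finset.sum_congr rfl hvcard2, sum_const, smul_eq_mul,
      ← hk, mul_comm]
  -- per-edge bound
  have hperf : ∀ f ∈ M, (∑ v ∈ Finset.univ.filter (fun v => v ∈ f), (CA v).card) ≤
      4 * k + (if Bad f then (VMᶜ.filter (fun z => Wit z f)).card else 0) := by
    intro f hf
    obtain ⟨x, y, rfl⟩ := sym2_repr f
    rw [hvset x y hf, sum_pair (hndiag x y hf)]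
    have hbx := hVMbound _ hf x (Sym2.mem_mk_left x y)
    have hby := hVMbound _ hf y (Sym2.mem_mk_right x y)
    have herase : (M.erase s(x, y)).card + 1 = k := by rw [hk]; exact card_erase_add_one hf
    by_cases hb : Bad s(x, y)
    · rw [if_pos hb]
      have hb' : 3 ≤ nsum s(x, y) := by simp only [hBaddef] at hb; exact hb
      have hw := hWitsBad _ hf hb'
      rw [hnsum_pair x y hf] at hw
      omega
    · rw [if_neg hb]
      have hnb : nsum s(x, y) < 3 := by
        by_contra hh
        push_neg at hh
        exact hb (by simp only [hBaddef]; exact hh)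
      rw [hnsum_pair x y hf] at hnb
      omega
  -- assemble
  have htot : totalColorDegree G c = ∑ v, (CA v).card := by
    unfold totalColorDegree
    exact Finset.sum_congr rfl (fun v _ => hdeg v)
  have hsum1 : (∑ v ∈ VM, (CA v).card) ≤
      ∑ f ∈ M, (4 * k + if Bad f then (VMᶜ.filter (fun z => Wit z f)).card else 0) := by
    conv_lhs => rw [hVMbi, sum_biUnion hpd]
    exact Finset.sum_le_sum hperf
  have hsum2 : (∑ f ∈ M, (4 * k + if Bad f then (VMᶜ.filter (fun z => Wit z f)).card else 0))
      = 4 * k * k + ∑ f ∈ M.filter Bad, (VMᶜ.filter (fun z => Wit z f)).card := by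
    rw [sum_add_distrib, sum_const, smul_eq_mul, ← hk]
    congr 1
    · ring
    · exact (sum_filter _ _).symm
  have hexch : (∑ f ∈ M.filter Bad, (VMᶜ.filter (fun z => Wit z f)).card)
      = ∑ z ∈ VMᶜ, ((M.filter Bad).filter (fun f => Wit z f)).card := by
    simp only [card_filter]
    exact Finset.sum_comm
  have houtz : ∀ z ∈ VMᶜ,
      (CA z).card + ((M.filter Bad).filter (fun f => Wit z f)).card ≤ 2 * k := by
    intro z hz
    rw [filter_filter]
    refine le_trans (hOUT z (mem_compl.mp hz)) ?_
    omega
  have hout_sum : ((∑ z ∈ VMᶜ, (CA z).card) +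
      ∑ z ∈ VMᶜ, ((M.filter Bad).filter (fun f => Wit z f)).card)
      ≤ (Fintype.card V - 2 * k) * (2 * k) := by
    rw [← sum_add_distrib]
    refine le_trans (Finset.sum_le_sum houtz) ?_
    rw [sum_const, smul_eq_mul, card_compl, hVMcard]
  have h2kn : 2 * k ≤ Fintype.card V := by
    rw [← hVMcard]
    exact card_le_univ VM
  have hsum12 : (∑ v ∈ VM, (CA v).card) ≤
      4 * k * k + ∑ z ∈ VMᶜ, ((M.filter Bad).filter (fun f => Wit z f)).card := by
    rw [← hexch, ← hsum2]
    exact hsum1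
  calc totalColorDegree G c
      = (∑ v ∈ VM, (CA v).card) + (∑ v ∈ VMᶜ, (CA v).card) := by
        rw [htot]
        exact (sum_add_sum_compl VM _).symm
    _ ≤ (4 * k * k + ∑ z ∈ VMᶜ, ((M.filter Bad).filter (fun f => Wit z f)).card)
        + (∑ v ∈ VMᶜ, (CA v).card) := Nat.add_le_add_right hsum12 _
    _ = 4 * k * k + ((∑ v ∈ VMᶜ, (CA v).card)
        + ∑ z ∈ VMᶜ, ((M.filter Bad).filter (fun f => Wit z f)).card) := by ring
    _ ≤ 4 * k * k + (Fintype.card V - 2 * k) * (2 * k) := Nat.add_le_add_left hout_sum _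
    _ = 2 * k * Fintype.card V := by
        rw [show 4 * k * k = 2 * k * (2 * k) by ring, ← add_mul,
          Nat.add_sub_cancel' h2kn]
        ring

theorem triangle_free_rainbow_matching [Fintype V] (G : SimpleGraph V)
    (hG : G.CliqueFree 3) (c : Sym2 V → α) (m : ℕ)
    (h : 2 * m * Fintype.card V < totalColorDegree G c) :
    ∃ M : Finset (Sym2 V), IsRainbowMatching G c M ∧ M.card = m + 1 := by
  classical
  by_contra hcon
  push_neg at hcon
  have hempty : IsRainbowMatching G c (∅ : Finset (Sym2 V)) := by
    refine ⟨by simp, by simp, by simp⟩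
  set S : Finset (Finset (Sym2 V)) :=
    Finset.univ.filter (fun N => IsRainbowMatching G c N) with hSdef
  have hSne : S.Nonempty := ⟨∅, by rw [hSdef]; simp [hempty]⟩
  obtain ⟨M, hMS, hMmax⟩ := S.exists_max_image Finset.card hSne
  have hM : IsRainbowMatching G c M := by
    rw [hSdef] at hMS; exact (Finset.mem_filter.mp hMS).2
  have hmax : ∀ N, IsRainbowMatching G c N → N.card ≤ M.card := by
    intro N hN
    exact hMmax N (by rw [hSdef]; simp [hN])
  have hcount := main_count G hG c M hM hmax
  have hkm : M.card ≤ m := by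
    by_contra hlt
    push_neg at hlt
    obtain ⟨N, hNsub, hNcard⟩ := Finset.exists_subset_card_eq hlt
    have hNrain : IsRainbowMatching G c N :=
      ⟨fun e he => hM.1 (Finset.coe_subset.mpr hNsub he),
        fun e he f hf => hM.2.1 e (hNsub he) f (hNsub hf),
        fun e he f hf => hM.2.2 e (hNsub he) f (hNsub hf)⟩
    exact hcon N hNrain hNcard
  have : totalColorDegree G c ≤ 2 * m * Fintype.card V := by
    calc totalColorDegree G c ≤ 2 * M.card * Fintype.card V := hcount
    _ ≤ 2 * m * Fintype.card V := by
        apply Nat.mul_le_mul_right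
        omega
  omega
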